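/- Let A ⊆ S^n be a subset such that there exists an immersion f : M → ℝ^{n+1} of a nonempty closed oriented n-manifold M with G_f(M) ⊆ A. Then A ∪ (−A) = S^n, where −A = { −x : x ∈ A }. -/

import Mathlib

open scoped RealInnerProductSpace Manifold

/-- At a local max of a differentiable real function on a boundaryless manifold,
the manifold derivative vanishes. -/
lemma mfderiv_eq_zero_of_isLocalMax {n : ℕ} {M : Type*} [TopologicalSpace M]
    [ChartedSpace (EuclideanSpace ℝ (Fin n)) M] [IsManifold (𝓡 n) (⊤ : ℕ∞) M]
    {h : M → ℝ} {q : M} (hd : MDifferentiableAt (𝓡 n) 𝓘(ℝ, ℝ) h q)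
    (hmax : IsLocalMax h q) : mfderiv (𝓡 n) 𝓘(ℝ, ℝ) h q = 0 := by
  set φ := extChartAt (𝓡 n) q with hφ
  have hc : ContinuousAt φ.symm (φ q) := continuousAt_extChartAt_symm q
  have hq : φ.symm (φ q) = q := (extChartAt (𝓡 n) q).left_inv (mem_extChartAt_source q)
  have key : IsLocalMax (h ∘ φ.symm) (φ q) := by
    have ht : Filter.Tendsto φ.symm (nhds (φ q)) (nhds q) := by
      simpa [hq] using hc.tendsto
    have := ht.eventually hmax
    refine this.mono fun y hy => ?_
    simpa [Function.comp, hq] using hy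
  have hz : fderiv ℝ (h ∘ φ.symm) (φ q) = 0 := key.fderiv_eq_zero
  rw [mfderiv]; refine (if_pos hd).trans ?_
  have hw : (writtenInExtChartAt (𝓡 n) 𝓘(ℝ, ℝ) q h : EuclideanSpace ℝ (Fin n) → ℝ)
      = h ∘ φ.symm := by
    simp [writtenInExtChartAt, Function.comp, hφ, chartAt_self_eq]
  rw [hw]
  have hr : Set.range (𝓡 n) = Set.univ := by simp
  rw [hr, fderivWithin_univ, hz]
  rfl

/-- If a nonempty closed oriented `n`-manifold admits an immersion into `ℝⁿ⁺¹` whose Gauss map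
(a continuous unit normal field) takes values in `A ⊆ Sⁿ`, then `A ∪ (-A) = Sⁿ`. -/
theorem spherical_image_union_neg_eq_sphere {n : ℕ}
    {M : Type*} [TopologicalSpace M] [ChartedSpace (EuclideanSpace ℝ (Fin n)) M]
    [IsManifold (𝓡 n) (⊤ : ℕ∞) M] [CompactSpace M] [Nonempty M]
    (A : Set (EuclideanSpace ℝ (Fin (n + 1))))
    (hA : A ⊆ Metric.sphere (0 : EuclideanSpace ℝ (Fin (n + 1))) 1)
    (f : M → EuclideanSpace ℝ (Fin (n + 1)))
    (hf : ContMDiff (𝓡 n) 𝓘(ℝ, EuclideanSpace ℝ (Fin (n + 1))) 1 f)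
    (himm : ∀ q, Function.Injective
      (mfderiv (𝓡 n) 𝓘(ℝ, EuclideanSpace ℝ (Fin (n + 1))) f q))
    (G : M → EuclideanSpace ℝ (Fin (n + 1))) (hGc : Continuous G)
    (hGu : ∀ q, ‖G q‖ = 1)
    (hGn : ∀ q (v : TangentSpace (𝓡 n) q),
      ⟪G q, mfderiv (𝓡 n) 𝓘(ℝ, EuclideanSpace ℝ (Fin (n + 1))) f q v⟫ = 0)
    (hGA : ∀ q, G q ∈ A) :
    A ∪ -A = Metric.sphere (0 : EuclideanSpace ℝ (Fin (n + 1))) 1 := by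
  apply Set.Subset.antisymm
  · rintro x (hx | hx)
    · exact hA hx
    · have h1 : -x ∈ A := hx
      have h2 := hA h1
      simp only [mem_sphere_iff_norm, sub_zero, norm_neg] at h2 ⊢
      simpa using h2
  · intro u hu
    have hu1 : ‖u‖ = 1 := by simpa using hu
    set h : M → ℝ := fun q => ⟪u, f q⟫ with hh
    have hfc : Continuous f := hf.continuous
    have hhc : Continuous h := (innerSL ℝ u).continuous.comp hfc
    obtain ⟨q₀, -, hq₀⟩ := isCompact_univ.exists_isMaxOn Set.univ_nonempty hhc.continuousOn
    have hmax : IsLocalMax h q₀ :=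
      Filter.Eventually.of_forall fun q => hq₀ (Set.mem_univ q)
    set D := mfderiv (𝓡 n) 𝓘(ℝ, EuclideanSpace ℝ (Fin (n + 1))) f q₀ with hD
    have hfd : HasMFDerivAt (𝓡 n) 𝓘(ℝ, EuclideanSpace ℝ (Fin (n + 1))) f q₀ D :=
      ((hf q₀).mdifferentiableAt one_ne_zero).hasMFDerivAt
    have hhd : HasMFDerivAt (𝓡 n) 𝓘(ℝ, ℝ) h q₀ ((innerSL ℝ u).comp D) :=
      ((innerSL ℝ u).hasMFDerivAt).comp q₀ hfd
    have hz : mfderiv (𝓡 n) 𝓘(ℝ, ℝ) h q₀ = 0 :=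
      mfderiv_eq_zero_of_isLocalMax hhd.mdifferentiableAt hmax
    have hu0 : ∀ v : TangentSpace (𝓡 n) q₀, ⟪u, D v⟫ = 0 := by
      intro v
      have h3 := hhd.mfderiv
      rw [hz] at h3
      have h4 := congrArg (fun (L : TangentSpace (𝓡 n) q₀ →L[ℝ] ℝ) => L v) h3.symm
      exact h4
    obtain ⟨Dl, hDl⟩ : ∃ Dl : EuclideanSpace ℝ (Fin n) →ₗ[ℝ] EuclideanSpace ℝ (Fin (n + 1)),
        ∀ v, Dl v = D v := ⟨D.toLinearMap, fun _ => rfl⟩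
    set W := LinearMap.range Dl with hW
    have hWrank : Module.finrank ℝ W = n := by
      have hinj : Function.Injective Dl := by
        intro a b hab
        rw [hDl a, hDl b] at hab
        exact himm q₀ hab
      rw [hW, LinearMap.finrank_range_of_inj hinj]
      simp [TangentSpace]
    have hWorth : Module.finrank ℝ (Wᗮ) = 1 := by
      have h5 := Submodule.finrank_add_finrank_orthogonal (K := W)
      have hE : Module.finrank ℝ (EuclideanSpace ℝ (Fin (n + 1))) = n + 1 := by simp
      omega
    have hmemW : ∀ x : EuclideanSpace ℝ (Fin (n + 1)),
        (∀ v, ⟪x, D v⟫ = 0) → x ∈ Wᗮ := by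
      intro x hx
      rw [Submodule.mem_orthogonal]
      rintro y ⟨v, rfl⟩
      rw [real_inner_comm, hDl v]
      exact hx v
    have hGmem : G q₀ ∈ Wᗮ := hmemW _ (hGn q₀)
    have humem : u ∈ Wᗮ := hmemW _ hu0
    have hGne : G q₀ ≠ 0 := by
      intro hG0
      have h6 := hGu q₀
      rw [hG0] at h6
      simp at h6
    have hspan : (Submodule.span ℝ {G q₀}) = Wᗮ := by
      apply Submodule.eq_of_le_of_finrank_le
      · rw [Submodule.span_le, Set.singleton_subset_iff]; exact hGmem
      · rw [hWorth, finrank_span_singleton hGne]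
    have humem' : u ∈ Submodule.span ℝ {G q₀} := hspan ▸ humem
    obtain ⟨c, hc⟩ := Submodule.mem_span_singleton.mp humem'
    have hcabs : |c| = 1 := by
      have h7 : ‖u‖ = |c| * ‖G q₀‖ := by rw [← hc]; simp [norm_smul]
      rw [hu1, hGu q₀, mul_one] at h7
      linarith
    rcases (abs_eq (by norm_num : (0:ℝ) ≤ 1)).mp hcabs with h1 | h1
    · left
      rw [← hc, h1, one_smul]
      exact hGA q₀
    · right
      rw [Set.mem_neg, ← hc, h1]
      simpa using hGA q₀
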